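/- For any set X of vertices and any ε with 0 ≤ ε ≤ 1, setting t = |T_ε(X)|, the set T_ε(X) is an (nε/t)-near clique; that is, the number of ordered pairs (u,v) of distinct vertices of T_ε(X) with {u,v} an edge is at least (1 − nε/t)·t·(t−1). -/

import Mathlib

open Finset
open scoped Classical

/-- `Knear G α X` = set of vertices adjacent to all but an `α` fraction of `X`. -/
noncomputable def Knear {V : Type*} [Fintype V] (G : SimpleGraph V) (α : ℝ)
    (X : Finset V) : Finset V :=
  Finset.univ.filter fun v =>
    (1 - α) * (X.card : ℝ) ≤ ((X.filter fun u => G.Adj v u).card : ℝ)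

/-- `Tnear G ε X = K_ε(K_{2ε²}(X)) ∩ K_{2ε²}(X)`. -/
noncomputable def Tnear {V : Type*} [Fintype V] (G : SimpleGraph V) (ε : ℝ)
    (X : Finset V) : Finset V :=
  Knear G ε (Knear G (2 * ε ^ 2) X) ∩ Knear G (2 * ε ^ 2) X

/-- Number of ordered pairs `(u,v) ∈ U × U` with `u ≠ v` and `{u,v} ∈ E`. -/
noncomputable def epairs {V : Type*} (G : SimpleGraph V) (U : Finset V) : ℕ :=
  ((U ×ˢ U).filter fun p => p.1 ≠ p.2 ∧ G.Adj p.1 p.2).card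

/-- For any `X ⊆ V` and `0 ≤ ε ≤ 1`, with `t = |T_ε(X)|`, the set `T_ε(X)` is an
`(nε/t)`-near clique. -/
theorem Tnear_is_near_clique {V : Type*} [Fintype V] (G : SimpleGraph V)
    (ε : ℝ) (hε0 : 0 ≤ ε) (hε1 : ε ≤ 1) (X : Finset V) :
    (epairs G (Tnear G ε X) : ℝ) ≥
      (1 - ((Fintype.card V : ℝ) * ε) / ((Tnear G ε X).card : ℝ)) *
        ((Tnear G ε X).card : ℝ) * (((Tnear G ε X).card : ℝ) - 1) := by
  classical
  set K := Knear G (2 * ε ^ 2) X with hK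
  set T := Tnear G ε X with hT
  set n := Fintype.card V with hn
  have hKn : (K.card : ℝ) ≤ n := by exact_mod_cast Finset.card_le_univ K
  -- per-vertex bound on missing partners
  have key : ∀ v ∈ T, ((T.filter fun u => v ≠ u ∧ ¬ G.Adj v u).card : ℝ) ≤ ε * n - 1 := by
    intro v hv
    have hvK : v ∈ K := (Finset.mem_inter.mp hv).2
    have hvKe : v ∈ Knear G ε K := (Finset.mem_inter.mp hv).1
    have hA : (1 - ε) * (K.card : ℝ) ≤ ((K.filter fun u => G.Adj v u).card : ℝ) := by
      simpa [Knear] using hvKe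
    have hsplit : ((K.filter fun u => G.Adj v u).card) +
        ((K.filter fun u => ¬ G.Adj v u).card) = K.card :=
      Finset.card_filter_add_card_filter_not _
    have hB : ((K.filter fun u => ¬ G.Adj v u).card : ℝ) ≤ ε * K.card := by
      have h := hsplit
      have : ((K.filter fun u => G.Adj v u).card : ℝ) +
          ((K.filter fun u => ¬ G.Adj v u).card : ℝ) = (K.card : ℝ) := by exact_mod_cast h
      nlinarith [Nat.cast_nonneg (α := ℝ) (K.filter fun u => G.Adj v u).card]
    have hvB : v ∈ (K.filter fun u => ¬ G.Adj v u) := by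
      simp [Finset.mem_filter, hvK, G.irrefl]
    have hsub : (T.filter fun u => v ≠ u ∧ ¬ G.Adj v u) ⊆
        (K.filter fun u => ¬ G.Adj v u) \ {v} := by
      intro u hu
      rw [Finset.mem_filter] at hu
      have huK : u ∈ K := (Finset.mem_inter.mp hu.1).2
      simp [Finset.mem_sdiff, Finset.mem_filter, huK, hu.2.2, (hu.2.1).symm]
    have hcard : (T.filter fun u => v ≠ u ∧ ¬ G.Adj v u).card ≤
        (K.filter fun u => ¬ G.Adj v u).card - 1 := by
      have := Finset.card_le_card hsub
      rwa [Finset.card_sdiff_of_subset (by simpa using hvB), Finset.card_singleton] at this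
    have h1 : 1 ≤ (K.filter fun u => ¬ G.Adj v u).card := Finset.card_pos.mpr ⟨v, hvB⟩
    have : ((T.filter fun u => v ≠ u ∧ ¬ G.Adj v u).card : ℝ) ≤
        ((K.filter fun u => ¬ G.Adj v u).card : ℝ) - 1 := by
      have := hcard
      have hc : ((K.filter fun u => ¬ G.Adj v u).card - 1 : ℕ) =
          ((K.filter fun u => ¬ G.Adj v u).card : ℕ) - 1 := rfl
      calc ((T.filter fun u => v ≠ u ∧ ¬ G.Adj v u).card : ℝ)
          ≤ (((K.filter fun u => ¬ G.Adj v u).card - 1 : ℕ) : ℝ) := by exact_mod_cast hcard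
        _ = ((K.filter fun u => ¬ G.Adj v u).card : ℝ) - 1 := by
            push_cast [Nat.cast_sub h1]; ring
    nlinarith
  -- decomposition of off-diagonal pairs
  set miss := ((T ×ˢ T).filter fun p => p.1 ≠ p.2 ∧ ¬ G.Adj p.1 p.2).card with hmiss
  have hsum : miss = ∑ v ∈ T, (T.filter fun u => v ≠ u ∧ ¬ G.Adj v u).card := by
    rw [hmiss, Finset.card_filter, Finset.sum_product]
    refine Finset.sum_congr rfl fun v _ => ?_
    rw [Finset.card_filter]
  have hmissle : (miss : ℝ) ≤ (T.card : ℝ) * (ε * n - 1) := by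
    rw [hsum]
    push_cast
    calc (∑ v ∈ T, ((T.filter fun u => v ≠ u ∧ ¬ G.Adj v u).card : ℝ))
        ≤ ∑ v ∈ T, (ε * n - 1) := Finset.sum_le_sum key
      _ = (T.card : ℝ) * (ε * n - 1) := by rw [Finset.sum_const, nsmul_eq_mul]
  have hpart : epairs G T + miss = T.offDiag.card := by
    have h := Finset.card_filter_add_card_filter_not
      (s := (T ×ˢ T).filter fun p => p.1 ≠ p.2) (p := fun p => G.Adj p.1 p.2)
    rw [Finset.filter_filter, Finset.filter_filter] at h
    have ho : T.offDiag = (T ×ˢ T).filter fun p => p.1 ≠ p.2 := by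
      ext x; simp [Finset.mem_offDiag, and_assoc]
    rw [ho]
    simpa [epairs, hmiss] using h
  have hoff : (T.offDiag.card : ℝ) = (T.card : ℝ) * ((T.card : ℝ) - 1) := by
    rw [Finset.offDiag_card]
    have h : T.card ≤ T.card * T.card := by nlinarith [Nat.zero_le T.card]
    rw [Nat.cast_sub h]
    push_cast
    ring
  have hep : (epairs G T : ℝ) = (T.card : ℝ) * ((T.card : ℝ) - 1) - miss := by
    have hc : ((epairs G T : ℕ) : ℝ) + (miss : ℝ) = (T.offDiag.card : ℝ) := by
      exact_mod_cast hpart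
    linarith [hoff]
  rw [hep]
  by_cases ht0 : (T.card : ℝ) = 0
  · have hT0 : T = ∅ := Finset.card_eq_zero.mp (by exact_mod_cast ht0)
    have hm0 : miss = 0 := by rw [hsum]; simp [hT0]
    rw [ht0, hm0]
    norm_num
  · have ht1 : (1:ℝ) ≤ (T.card : ℝ) := by
      have h1 : 1 ≤ T.card := Nat.pos_of_ne_zero (fun h => ht0 (by simp [h]))
      exact_mod_cast h1
    have hR : (1 - ((n:ℝ) * ε) / ((T.card : ℕ) : ℝ)) * ((T.card : ℕ) : ℝ) *
        (((T.card : ℕ) : ℝ) - 1) = ((T.card : ℝ) - (n:ℝ) * ε) * ((T.card : ℝ) - 1) := by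
      field_simp
    rw [hR]
    rcases le_or_gt ((n:ℝ) * ε) ((T.card : ℝ)) with hcase | hcase
    · nlinarith [hmissle]
    · have h1 : ((T.card:ℝ) - (n:ℝ) * ε) * ((T.card:ℝ) - 1) ≤ 0 :=
        mul_nonpos_of_nonpos_of_nonneg (by linarith) (by linarith)
      have h2 : (miss : ℝ) ≤ (T.card:ℝ) * ((T.card:ℝ) - 1) := by
        have hc : ((epairs G T : ℕ) : ℝ) + (miss : ℝ) = (T.card:ℝ) * ((T.card:ℝ) - 1) := by
          rw [← hoff]; exact_mod_cast hpart
        nlinarith [Nat.cast_nonneg (α := ℝ) (epairs G T)]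
      linarith
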